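/- Let P_1, …, P_h (h ≥ 4) be paths on the triangular grid admitting a system of non-representative edges u_1, …, u_h, and suppose three of these edges, say u_a, u_b, u_c, all lie on a common path Q on the triangular grid that has at most one bend, with u_b lying between u_a and u_c on Q. Then the path P_b (the member of the family not containing u_b) has at least two bends. -/

import Mathlib

/-- The triangular grid: the simple graph on `ℤ × ℤ` where two points are adjacent
iff their difference is `±(1,0)`, `±(0,1)` or `±(1,1)`. -/
def TGrid : SimpleGraph (ℤ × ℤ) where
  Adj u v :=
    (v.1 - u.1 = 1 ∧ v.2 - u.2 = 0) ∨ (v.1 - u.1 = -1 ∧ v.2 - u.2 = 0) ∨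
    (v.1 - u.1 = 0 ∧ v.2 - u.2 = 1) ∨ (v.1 - u.1 = 0 ∧ v.2 - u.2 = -1) ∨
    (v.1 - u.1 = 1 ∧ v.2 - u.2 = 1) ∨ (v.1 - u.1 = -1 ∧ v.2 - u.2 = -1)
  symm := ⟨by intro u v h; omega⟩
  loopless := ⟨by intro u h; omega⟩

/-- The (symmetric) direction datum of a grid edge: the pair of absolute coordinate
differences.  For grid edges this is `(1,0)` (horizontal), `(0,1)` (vertical) or
`(1,1)` (diagonal). -/
def edir (e : Sym2 (ℤ × ℤ)) : ℤ × ℤ :=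
  Sym2.lift ⟨fun u v => (|u.1 - v.1|, |u.2 - v.2|), by
    intro u v; simp [abs_sub_comm]⟩ e

/-- The `t`-th edge of a walk. -/
def wEdge {u v : ℤ × ℤ} (p : TGrid.Walk u v) (t : ℕ) : Sym2 (ℤ × ℤ) :=
  s(p.getVert t, p.getVert (t + 1))

/-- The number of bends of a walk: the number of consecutive pairs of edges with
different directions. -/
def bendCount {u v : ℤ × ℤ} (p : TGrid.Walk u v) : ℕ :=
  (List.range (p.length - 1)).countP
    (fun i => decide (edir (wEdge p i) ≠ edir (wEdge p (i + 1))))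

/-- `b` is a bend point of the walk `p`. -/
def IsBendAt {u v : ℤ × ℤ} (p : TGrid.Walk u v) (b : ℤ × ℤ) : Prop :=
  ∃ i : ℕ, i + 2 ≤ p.length ∧ p.getVert (i + 1) = b ∧
    edir (wEdge p i) ≠ edir (wEdge p (i + 1))

/-- A (nontrivial simple) path on the triangular grid. -/
structure TPath where
  src : ℤ × ℤ
  dst : ℤ × ℤ
  walk : TGrid.Walk src dst
  isPath : walk.IsPath
  nontriv : 0 < walk.length

/-- The set of grid edges of a path. -/
def pEdges (P : TPath) : Set (Sym2 (ℤ × ℤ)) := {e | e ∈ P.walk.edges}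

/-- The set of grid points of a path. -/
def pPts (P : TPath) : Set (ℤ × ℤ) := {q | q ∈ P.walk.support}

/-- A segment of a path: a maximal straight (bend-free) subpath, recorded by the
interval of edge indices `[i, j)` it occupies. -/
structure Segment (P : TPath) where
  i : ℕ
  j : ℕ
  lt : i < j
  le : j ≤ P.walk.length
  straight : ∀ t, i ≤ t → t < j → edir (wEdge P.walk t) = edir (wEdge P.walk i)
  maxLeft : i = 0 ∨ edir (wEdge P.walk (i - 1)) ≠ edir (wEdge P.walk i)
  maxRight : j = P.walk.length ∨ edir (wEdge P.walk (j - 1)) ≠ edir (wEdge P.walk j)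

/-- The set of grid edges of a segment. -/
def Segment.edges {P : TPath} (s : Segment P) : Set (Sym2 (ℤ × ℤ)) :=
  {e | ∃ t, s.i ≤ t ∧ t < s.j ∧ e = wEdge P.walk t}

/-- The set of grid points of a segment. -/
def Segment.pts {P : TPath} (s : Segment P) : Set (ℤ × ℤ) :=
  {q | ∃ t, s.i ≤ t ∧ t ≤ s.j ∧ q = P.walk.getVert t}

/-- The direction of a segment. -/
def Segment.dir {P : TPath} (s : Segment P) : ℤ × ℤ := edir (wEdge P.walk s.i)

/-- The three directions of the triangular grid. -/
inductive Dir | H | V | D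
deriving DecidableEq

/-- The direction of the (straight) line from `a` to `b`. -/
def dirOf (a b : ℤ × ℤ) : Dir :=
  if a.2 = b.2 then .H else if a.1 = b.1 then .V else .D

/-- A grid line of the triangular grid: a full horizontal, vertical or diagonal line. -/
structure GridLine where
  dir : Dir
  c : ℤ

/-- The parametrization of the points of a grid line. -/
def GridLine.pt (l : GridLine) (t : ℤ) : ℤ × ℤ :=
  match l.dir with
  | .H => (t, l.c)
  | .V => (l.c, t)
  | .D => (l.c + t, t)

/-- The `t`-th edge of a grid line. -/
def GridLine.edge (l : GridLine) (t : ℤ) : Sym2 (ℤ × ℤ) := s(l.pt t, l.pt (t + 1))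

/-- The set of grid points of a grid line. -/
def GridLine.pts (l : GridLine) : Set (ℤ × ℤ) := Set.range l.pt

/-- The set of grid edges of a grid line. -/
def GridLine.edges (l : GridLine) : Set (Sym2 (ℤ × ℤ)) := Set.range l.edge

/-- A right triangle of the triangular grid, given by a base corner `p`, a leg
length `k ≥ 1`, and one of the two possible orientations. -/
structure RightTri where
  p : ℤ × ℤ
  k : ℤ
  hk : 1 ≤ k
  orientA : Bool

/-- The set of grid edges of a right triangle. -/
def RightTri.edges (T : RightTri) : Set (Sym2 (ℤ × ℤ)) :=
  if T.orientA then
    {e | ∃ t : ℤ, 0 ≤ t ∧ t < T.k ∧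
      (e = s((T.p.1 + t, T.p.2), (T.p.1 + t + 1, T.p.2)) ∨
       e = s((T.p.1 + T.k, T.p.2 + t), (T.p.1 + T.k, T.p.2 + t + 1)) ∨
       e = s((T.p.1 + t, T.p.2 + t), (T.p.1 + t + 1, T.p.2 + t + 1)))}
  else
    {e | ∃ t : ℤ, 0 ≤ t ∧ t < T.k ∧
      (e = s((T.p.1, T.p.2 + t), (T.p.1, T.p.2 + t + 1)) ∨
       e = s((T.p.1 + t, T.p.2 + T.k), (T.p.1 + t + 1, T.p.2 + T.k)) ∨
       e = s((T.p.1 + t, T.p.2 + t), (T.p.1 + t + 1, T.p.2 + t + 1)))}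

/-- The three corners of a right triangle. -/
def RightTri.corners (T : RightTri) : Set (ℤ × ℤ) :=
  if T.orientA then {T.p, (T.p.1 + T.k, T.p.2), (T.p.1 + T.k, T.p.2 + T.k)}
  else {T.p, (T.p.1, T.p.2 + T.k), (T.p.1 + T.k, T.p.2 + T.k)}

/-- `U(𝒫)`: the subgraph of the grid formed by all segments of members of the family
that share at least one grid edge with another member, given by its set of edges. -/
def UEdges {ι : Type} (P : ι → TPath) : Set (Sym2 (ℤ × ℤ)) :=
  {e | ∃ i : ι, ∃ s : Segment (P i), e ∈ s.edges ∧
        ∃ j : ι, j ≠ i ∧ (s.edges ∩ pEdges (P j)).Nonempty}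

/-- A B₁-EPGₜ representation of a simple graph `G`: a family of at most-one-bend
paths on the triangular grid whose edge-intersection graph is `G`. -/
def IsB1EPGtRep {V : Type} (G : SimpleGraph V) (Rep : V → TPath) : Prop :=
  (∀ v, bendCount (Rep v).walk ≤ 1) ∧
  ∀ u v : V, u ≠ v → (G.Adj u v ↔ (pEdges (Rep u) ∩ pEdges (Rep v)).Nonempty)

open SimpleGraph Walk

def six (v : ℤ × ℤ) : Prop :=
  v = (1,0) ∨ v = (-1,0) ∨ v = (0,1) ∨ v = (0,-1) ∨ v = (1,1) ∨ v = (-1,-1)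

lemma adj_cases {a b : ℤ × ℤ} (h : TGrid.Adj a b) : six (b - a) := by
  have h' : (b.1 - a.1 = 1 ∧ b.2 - a.2 = 0) ∨ (b.1 - a.1 = -1 ∧ b.2 - a.2 = 0) ∨
    (b.1 - a.1 = 0 ∧ b.2 - a.2 = 1) ∨ (b.1 - a.1 = 0 ∧ b.2 - a.2 = -1) ∨
    (b.1 - a.1 = 1 ∧ b.2 - a.2 = 1) ∨ (b.1 - a.1 = -1 ∧ b.2 - a.2 = -1) := h
  simp only [six, Prod.ext_iff, Prod.fst_sub, Prod.snd_sub]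
  omega

lemma six_ne_zero {v : ℤ × ℤ} (h : six v) : v ≠ 0 := by
  rcases h with rfl|rfl|rfl|rfl|rfl|rfl <;> simp [Prod.ext_iff]

lemma step_six {x y : ℤ × ℤ} (p : TGrid.Walk x y) {t : ℕ} (ht : t < p.length) :
    six (p.getVert (t+1) - p.getVert t) :=
  adj_cases (p.adj_getVert_succ ht)

lemma edir_mk (a b : ℤ × ℤ) : edir s(a, b) = (|a.1 - b.1|, |a.2 - b.2|) := rfl

lemma mem_edges_iff {x y : ℤ × ℤ} (p : TGrid.Walk x y) (e : Sym2 (ℤ × ℤ)) :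
    e ∈ p.edges ↔ ∃ t, t < p.length ∧ e = wEdge p t := by
  induction p with
  | nil => simp
  | @cons a b c h q ih =>
    simp only [Walk.edges_cons, List.mem_cons, ih, Walk.length_cons]
    constructor
    · rintro (rfl | ⟨t, ht, rfl⟩)
      · exact ⟨0, by omega, by simp [wEdge, Walk.getVert_cons_succ, Walk.getVert_zero]⟩
      · exact ⟨t+1, by omega, by simp [wEdge, Walk.getVert_cons_succ]⟩
    · rintro ⟨t, ht, rfl⟩
      cases t with
      | zero => left; simp [wEdge, Walk.getVert_cons_succ, Walk.getVert_zero]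
      | succ n => right; exact ⟨n, by omega, by simp [wEdge, Walk.getVert_cons_succ]⟩

lemma getVert_ne {x y : ℤ × ℤ} {p : TGrid.Walk x y} (hp : p.IsPath) :
    ∀ {i j : ℕ}, i < j → j ≤ p.length → p.getVert i ≠ p.getVert j := by
  induction p with
  | nil => intro i j hij hj; simp at hj; omega
  | @cons a b c h q ih =>
    intro i j hij hj
    rw [Walk.cons_isPath_iff] at hp
    cases i with
    | zero =>
      rw [Walk.getVert_zero, Walk.getVert_cons q h (by omega)]
      intro heq
      exact hp.2 (Walk.mem_support_iff_exists_getVert.mpr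
        ⟨j - 1, heq.symm, by simp [Walk.length_cons] at hj; omega⟩)
    | succ n =>
      cases j with
      | zero => omega
      | succ m =>
        rw [Walk.getVert_cons_succ, Walk.getVert_cons_succ]
        exact ih hp.1 (by omega) (by simp [Walk.length_cons] at hj; omega)
lemma steps_eq {x y : ℤ × ℤ} {p : TGrid.Walk x y} (hp : p.IsPath) {t : ℕ}
    (ht : t + 1 < p.length) (hd : edir (wEdge p t) = edir (wEdge p (t+1))) :
    p.getVert (t+1+1) - p.getVert (t+1) = p.getVert (t+1) - p.getVert t := by
  have h1 := adj_cases (p.adj_getVert_succ (show t < p.length by omega))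
  have h2 := adj_cases (p.adj_getVert_succ ht)
  have hne := getVert_ne hp (show t < t + 1 + 1 by omega) (by omega)
  simp only [wEdge, edir_mk, Prod.ext_iff] at hd
  rw [abs_eq_abs, abs_eq_abs] at hd
  simp only [six, Prod.ext_iff, Prod.fst_sub, Prod.snd_sub] at h1 h2
  have hne' : ¬ (p.getVert t).1 = (p.getVert (t+1+1)).1 ∨
      ¬ (p.getVert t).2 = (p.getVert (t+1+1)).2 := by
    by_contra hc
    push_neg at hc
    exact hne (Prod.ext_iff.mpr ⟨hc.1, hc.2⟩)
  simp only [Prod.ext_iff, Prod.fst_sub, Prod.snd_sub]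
  omega

lemma const_step {x y : ℤ × ℤ} {p : TGrid.Walk x y} (hp : p.IsPath) {i j : ℕ}
    (hj : j ≤ p.length)
    (hs : ∀ t, i ≤ t → t < j → edir (wEdge p t) = edir (wEdge p i)) :
    ∀ t, i ≤ t → t < j →
      p.getVert (t+1) - p.getVert t = p.getVert (i+1) - p.getVert i := by
  intro t h1
  induction t, h1 using Nat.le_induction with
  | base => intro _; rfl
  | succ n hn ihn =>
    intro h2
    have hd : edir (wEdge p n) = edir (wEdge p (n+1)) := by
      rw [hs n hn (by omega), hs (n+1) (by omega) h2]
    rw [steps_eq hp (show n + 1 < p.length by omega) hd, ihn (by omega)]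

lemma affine {x y : ℤ × ℤ} {p : TGrid.Walk x y} (hp : p.IsPath) {i j m : ℕ}
    (hj : j ≤ p.length) (him : i ≤ m) (hmj : m ≤ j)
    (hs : ∀ t, i ≤ t → t < j → edir (wEdge p t) = edir (wEdge p i)) :
    ∀ t, i ≤ t → t ≤ j →
      p.getVert t = p.getVert m
        + ((t:ℤ) - (m:ℤ)) • (p.getVert (i+1) - p.getVert i) := by
  have base : ∀ t, i ≤ t → t ≤ j →
      p.getVert t = p.getVert i
        + ((t:ℤ) - (i:ℤ)) • (p.getVert (i+1) - p.getVert i) := by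
    intro t h1
    induction t, h1 using Nat.le_induction with
    | base => intro _; simp
    | succ n hn ihn =>
      intro h2
      have hstep := const_step hp hj hs n hn (by omega)
      have : p.getVert (n+1) = p.getVert n + (p.getVert (i+1) - p.getVert i) := by
        rw [← hstep]; abel
      rw [this, ihn (by omega)]
      push_cast
      module
  intro t h1 h2
  rw [base t h1 h2, base m him hmj]
  module
lemma splitBend {x y : ℤ × ℤ} (p : TGrid.Walk x y) (hb : bendCount p ≤ 1)
    (hl : 0 < p.length) :
    ∃ m, 1 ≤ m ∧ m ≤ p.length ∧
      (∀ s t, s < m → t < m → edir (wEdge p s) = edir (wEdge p t)) ∧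
      (∀ s t, m ≤ s → s < p.length → m ≤ t → t < p.length →
        edir (wEdge p s) = edir (wEdge p t)) ∧
      (m < p.length → edir (wEdge p (m-1)) ≠ edir (wEdge p m)) := by
  classical
  set n := p.length with hn
  -- at most one bend index
  have key : ∀ i j, i < j → j < n - 1 →
      edir (wEdge p i) ≠ edir (wEdge p (i+1)) →
      edir (wEdge p j) ≠ edir (wEdge p (j+1)) → False := by
    intro i j hij hj hi hjb
    have hcount : bendCount p =
        ((List.range (n-1)).filter
          (fun k => decide (edir (wEdge p k) ≠ edir (wEdge p (k+1))))).length := by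
      rw [bendCount, List.countP_eq_length_filter]
    set l := (List.range (n-1)).filter
      (fun k => decide (edir (wEdge p k) ≠ edir (wEdge p (k+1)))) with hls
    have hi' : i ∈ l := by
      rw [hls, List.mem_filter]
      exact ⟨List.mem_range.mpr (by omega), decide_eq_true hi⟩
    have hj' : j ∈ l := by
      rw [hls, List.mem_filter]
      exact ⟨List.mem_range.mpr hj, decide_eq_true hjb⟩
    have hlen : l.length ≤ 1 := by rw [← hcount]; exact hb
    interval_cases hll : l.length
    · rw [List.length_eq_zero_iff] at hll; rw [hll] at hi'; simp at hi'
    · rw [List.length_eq_one_iff] at hll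
      obtain ⟨a, hla⟩ := hll
      rw [hla] at hi' hj'
      simp at hi' hj'
      omega
  -- propagation
  have prop : ∀ s t, s ≤ t → t < n →
      (∀ k, s ≤ k → k < t → edir (wEdge p k) = edir (wEdge p (k+1))) →
      edir (wEdge p s) = edir (wEdge p t) := by
    intro s t hst
    induction t, hst using Nat.le_induction with
    | base => intro _ _; rfl
    | succ k hk ihk =>
      intro hkn hall
      rw [ihk (by omega) (fun k' h1 h2 => hall k' h1 (by omega))]
      exact hall k hk (by omega)
  by_cases hex : ∃ i, i < n - 1 ∧ edir (wEdge p i) ≠ edir (wEdge p (i+1))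
  · obtain ⟨i0, hi0, hbend⟩ := hex
    -- use the least one
    have hex' : ∃ i, i < n - 1 ∧ edir (wEdge p i) ≠ edir (wEdge p (i+1)) := ⟨i0, hi0, hbend⟩
    set i1 := Nat.find hex' with hi1
    obtain ⟨hi1lt, hi1b⟩ := Nat.find_spec hex'
    have hmin : ∀ k, k < i1 → edir (wEdge p k) = edir (wEdge p (k+1)) := by
      intro k hk
      by_contra hc
      have := Nat.find_min hex' hk
      push_neg at this
      exact hc (this (by omega))
    refine ⟨i1 + 1, by omega, by omega, ?_, ?_, ?_⟩
    · intro s t hs ht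
      have h1 : edir (wEdge p s) = edir (wEdge p i1) :=
        prop s i1 (by omega) (by omega) (fun k h1 h2 => hmin k h2)
      have h2 : edir (wEdge p t) = edir (wEdge p i1) :=
        prop t i1 (by omega) (by omega) (fun k h1 h2 => hmin k h2)
      rw [h1, h2]
    · intro s t hs hsn ht htn
      have hnob : ∀ k, i1 + 1 ≤ k → k < n - 1 →
          edir (wEdge p k) = edir (wEdge p (k+1)) := by
        intro k h1 h2
        by_contra hc
        exact key i1 k (by omega) h2 hi1b hc
      have h1 : edir (wEdge p (i1+1)) = edir (wEdge p s) :=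
        prop (i1+1) s hs hsn (fun k hk1 hk2 => hnob k hk1 (by omega))
      have h2 : edir (wEdge p (i1+1)) = edir (wEdge p t) :=
        prop (i1+1) t ht htn (fun k hk1 hk2 => hnob k hk1 (by omega))
      rw [← h1, ← h2]
    · intro _
      simpa using hi1b
  · push_neg at hex
    refine ⟨n, by omega, le_refl _, ?_, ?_, ?_⟩
    · intro s t hs ht
      rcases Nat.le_total s t with h | h
      · exact (prop s t h ht (fun k h1 h2 => hex k (by omega))).symm ▸
          (prop s t h ht (fun k h1 h2 => hex k (by omega)))
      · exact (prop t s h hs (fun k h1 h2 => hex k (by omega))).symm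
    · intro s t hs hsn; omega
    · intro hc; omega
/-- An edge of the line through `x` with direction `v`, at offset `β`. -/
def lE (x v : ℤ × ℤ) (β : ℤ) : Sym2 (ℤ × ℤ) := s(x + β • v, x + (β+1) • v)

lemma edir_lE (x v : ℤ × ℤ) (β : ℤ) : edir (lE x v β) = (|v.1|, |v.2|) := by
  simp only [lE, edir_mk, Prod.fst_add, Prod.snd_add, Prod.smul_fst, Prod.smul_snd,
    smul_eq_mul]
  rw [Prod.mk.injEq]
  constructor <;>
    rw [show ∀ a b c : ℤ, a + b - (a + c) = -(c - b) from by intros; ring, abs_neg] <;>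
    congr 1 <;> ring

lemma lE_neg (x v : ℤ × ℤ) (β : ℤ) : lE x v β = lE x (-v) (-β-1) := by
  rw [lE, lE, Sym2.eq_iff]
  right
  constructor <;> module

lemma smul_cancel {v : ℤ × ℤ} (hv : v ≠ 0) {a b : ℤ} (h : a • v = b • v) : a = b := by
  have h1 := congrArg Prod.fst h
  have h2 := congrArg Prod.snd h
  simp only [Prod.smul_fst, Prod.smul_snd, smul_eq_mul] at h1 h2
  have hv' : v.1 ≠ 0 ∨ v.2 ≠ 0 := by
    by_contra hc; push_neg at hc; exact hv (Prod.ext_iff.mpr ⟨hc.1, hc.2⟩)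
  rcases hv' with h | h
  · exact mul_right_cancel₀ h h1
  · exact mul_right_cancel₀ h h2

lemma lemA {x y v w : ℤ × ℤ} {α τ : ℤ} (h : lE x w α = lE y v τ) :
    (w = v ∧ x = y + (τ - α) • v) ∨ (w = -v ∧ x = y + (τ + 1 + α) • v) := by
  rw [lE, lE, Sym2.eq_iff] at h
  rcases h with ⟨h1, h2⟩ | ⟨h1, h2⟩
  · left
    have e1 := congrArg Prod.fst h1; have e2 := congrArg Prod.fst h2
    have f1 := congrArg Prod.snd h1; have f2 := congrArg Prod.snd h2
    simp only [Prod.fst_add, Prod.snd_add, Prod.smul_fst, Prod.smul_snd,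
      smul_eq_mul] at e1 e2 f1 f2
    constructor
    · exact Prod.ext_iff.mpr ⟨by linear_combination e2 - e1, by linear_combination f2 - f1⟩
    · refine Prod.ext_iff.mpr ⟨?_, ?_⟩ <;>
        simp only [Prod.fst_add, Prod.snd_add, Prod.smul_fst, Prod.smul_snd, smul_eq_mul]
      · linear_combination e1 - α * (e2 - e1)
      · linear_combination f1 - α * (f2 - f1)
  · right
    have e1 := congrArg Prod.fst h1; have e2 := congrArg Prod.fst h2
    have f1 := congrArg Prod.snd h1; have f2 := congrArg Prod.snd h2
    simp only [Prod.fst_add, Prod.snd_add, Prod.smul_fst, Prod.smul_snd,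
      smul_eq_mul, Prod.fst_neg, Prod.snd_neg] at e1 e2 f1 f2 ⊢
    constructor
    · refine Prod.ext_iff.mpr ⟨?_, ?_⟩ <;>
        simp only [Prod.fst_neg, Prod.snd_neg]
      · linear_combination e2 - e1
      · linear_combination f2 - f1
    · refine Prod.ext_iff.mpr ⟨?_, ?_⟩ <;>
        simp only [Prod.fst_add, Prod.snd_add, Prod.smul_fst, Prod.smul_snd, smul_eq_mul]
      · linear_combination e1 - α * (e2 - e1)
      · linear_combination f1 - α * (f2 - f1)
lemma indep {v w : ℤ × ℤ} (hv : six v) (hw : six w) (hne : ¬ (v = w ∨ v = -w))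
    {a b : ℤ} (h : a • v = b • w) : a = 0 ∧ b = 0 := by
  rcases hv with rfl|rfl|rfl|rfl|rfl|rfl <;> rcases hw with rfl|rfl|rfl|rfl|rfl|rfl <;>
    first
    | (norm_num [Prod.ext_iff, Prod.smul_fst, Prod.smul_snd, smul_eq_mul,
        Prod.neg_mk, not_or] at h hne ⊢; omega)
    | (norm_num [Prod.ext_iff, Prod.smul_fst, Prod.smul_snd, smul_eq_mul,
        Prod.neg_mk, not_or] at h hne ⊢)
    | (norm_num [Prod.ext_iff, Prod.neg_mk, not_or] at hne)

lemma line_anchor {z v w : ℤ × ℤ} (hv : v ≠ 0) {α τa τb : ℤ}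
    (h1 : lE z w α = lE z v τa) (hab : τa < τb) (hb0 : τb < 0) :
    ∃ β : ℤ, ((α < 0 ∧ α < β ∧ β < 0) ∨ (0 ≤ α ∧ 0 ≤ β ∧ β < α)) ∧
      lE z w β = lE z v τb := by
  rcases lemA h1 with ⟨hw, hz⟩ | ⟨hw, hz⟩
  · have h0 : (τa - α) • v = (0:ℤ) • v := by
      rw [zero_smul]; exact (left_eq_add.mp hz)
    have hα : α = τa := by have := smul_cancel hv h0; omega
    exact ⟨τb, Or.inl (by omega), by rw [hw]⟩
  · have h0 : (τa + 1 + α) • v = (0:ℤ) • v := by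
      rw [zero_smul]; exact (left_eq_add.mp hz)
    have hα : α = -τa - 1 := by have := smul_cancel hv h0; omega
    refine ⟨-τb - 1, Or.inr (by omega), ?_⟩
    rw [hw]
    exact (lE_neg z v τb).symm

lemma line_between {x y v w : ℤ × ℤ} (hv : v ≠ 0) {αa αc τa τb τc : ℤ}
    (h1 : lE x w αa = lE y v τa) (h2 : lE x w αc = lE y v τc)
    (hab : τa < τb) (hbc : τb < τc) :
    ∃ β : ℤ, (αa < β ∧ β < αc ∨ αc < β ∧ β < αa) ∧ lE x w β = lE y v τb := by
  rcases lemA h1 with ⟨hw, hz1⟩ | ⟨hw, hz1⟩ <;>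
    rcases lemA h2 with ⟨hw2, hz2⟩ | ⟨hw2, hz2⟩
  · have hd := smul_cancel hv (add_left_cancel (hz1.symm.trans hz2))
    refine ⟨αa + (τb - τa), Or.inl (by omega), ?_⟩
    rw [hw, hz1, lE, lE, Sym2.eq_iff]
    left
    constructor <;> module
  · exfalso
    apply hv
    have h := hw.symm.trans hw2
    simp only [Prod.ext_iff, Prod.fst_neg, Prod.snd_neg, Prod.fst_zero, Prod.snd_zero] at h ⊢
    constructor <;> omega
  · exfalso
    apply hv
    have h := hw2.symm.trans hw
    simp only [Prod.ext_iff, Prod.fst_neg, Prod.snd_neg, Prod.fst_zero, Prod.snd_zero] at h ⊢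
    constructor <;> omega
  · have hd := smul_cancel hv (add_left_cancel (hz1.symm.trans hz2))
    refine ⟨αa - (τb - τa), Or.inr (by omega), ?_⟩
    rw [hw, hz1, lE, lE, Sym2.eq_iff]
    right
    constructor <;> module
lemma wEdge_lE {x y : ℤ × ℤ} {p : TGrid.Walk x y} {i j m : ℕ} {base v : ℤ × ℤ}
    (aff : ∀ s, i ≤ s → s ≤ j → p.getVert s = base + ((s:ℤ) - (m:ℤ)) • v)
    {t : ℕ} (h1 : i ≤ t) (h2 : t + 1 ≤ j) : wEdge p t = lE base v ((t:ℤ) - (m:ℤ)) := by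
  rw [wEdge, lE, aff t h1 (by omega), aff (t+1) (by omega) h2, Sym2.eq_iff]
  left
  refine ⟨rfl, ?_⟩
  congr 1
  push_cast
  ring

lemma Wside {wu wv : ℤ × ℤ} {Ww : TGrid.Walk wu wv} (hWp : Ww.IsPath)
    (hWb : bendCount Ww ≤ 1) (hWl : 0 < Ww.length)
    {y v : ℤ × ℤ} (hv : v ≠ 0) {τa τb τc : ℤ} (hab : τa < τb) (hbc : τb < τc)
    {sa sc : ℕ} (hsa : sa < Ww.length) (hsc : sc < Ww.length)
    (ea : wEdge Ww sa = lE y v τa) (ec : wEdge Ww sc = lE y v τc) :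
    ∃ s, s < Ww.length ∧ wEdge Ww s = lE y v τb := by
  obtain ⟨mW, hm1, hm2, hseg1, hseg2, hbendW⟩ := splitBend Ww hWb hWl
  have affW1 : ∀ s, 0 ≤ s → s ≤ mW → Ww.getVert s =
      Ww.getVert mW + ((s:ℤ) - (mW:ℤ)) • (Ww.getVert 1 - Ww.getVert 0) :=
    affine hWp hm2 (Nat.zero_le _) (le_refl _) (fun t _ ht => hseg1 t 0 ht (by omega))
  have eW1 : ∀ s, s + 1 ≤ mW → wEdge Ww s =
      lE (Ww.getVert mW) (Ww.getVert 1 - Ww.getVert 0) ((s:ℤ) - (mW:ℤ)) :=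
    fun s hs => wEdge_lE affW1 (Nat.zero_le _) hs
  rcases Nat.lt_or_ge sa mW with hsa' | hsa' <;> rcases Nat.lt_or_ge sc mW with hsc' | hsc'
  · -- both in first segment
    have ha' : lE (Ww.getVert mW) (Ww.getVert 1 - Ww.getVert 0) ((sa:ℤ) - (mW:ℤ)) =
        lE y v τa := by rw [← eW1 sa (by omega)]; exact ea
    have hc' : lE (Ww.getVert mW) (Ww.getVert 1 - Ww.getVert 0) ((sc:ℤ) - (mW:ℤ)) =
        lE y v τc := by rw [← eW1 sc (by omega)]; exact ec
    obtain ⟨β, hβ, heq⟩ := line_between hv ha' hc' hab hbc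
    obtain ⟨n, hn⟩ : ∃ n : ℕ, (n:ℤ) = mW + β :=
      ⟨(mW + β).toNat, Int.toNat_of_nonneg (by omega)⟩
    refine ⟨n, by omega, ?_⟩
    rw [eW1 n (by omega), show ((n:ℤ) - (mW:ℤ)) = β by omega]
    exact heq
  · -- mixed : contradiction
    exfalso
    apply hbendW (by omega)
    calc edir (wEdge Ww (mW - 1)) = edir (wEdge Ww sa) := hseg1 (mW-1) sa (by omega) hsa'
      _ = edir (lE y v τa) := congrArg edir ea
      _ = edir (lE y v τc) := by rw [edir_lE, edir_lE]
      _ = edir (wEdge Ww sc) := (congrArg edir ec).symm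
      _ = edir (wEdge Ww mW) := hseg2 sc mW hsc' hsc (by omega) (by omega)
  · -- mixed : contradiction
    exfalso
    apply hbendW (by omega)
    calc edir (wEdge Ww (mW - 1)) = edir (wEdge Ww sc) := hseg1 (mW-1) sc (by omega) hsc'
      _ = edir (lE y v τc) := congrArg edir ec
      _ = edir (lE y v τa) := by rw [edir_lE, edir_lE]
      _ = edir (wEdge Ww sa) := (congrArg edir ea).symm
      _ = edir (wEdge Ww mW) := hseg2 sa mW hsa' hsa (by omega) (by omega)
  · -- both in second segment
    have hmWlt : mW < Ww.length := by omega
    have affW2 : ∀ s, mW ≤ s → s ≤ Ww.length → Ww.getVert s =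
        Ww.getVert mW + ((s:ℤ) - (mW:ℤ)) • (Ww.getVert (mW+1) - Ww.getVert mW) :=
      affine hWp (le_refl _) (le_refl _) hm2 (fun t ht1 ht2 => hseg2 t mW ht1 ht2 (le_refl _) hmWlt)
    have eW2 : ∀ s, mW ≤ s → s < Ww.length → wEdge Ww s =
        lE (Ww.getVert mW) (Ww.getVert (mW+1) - Ww.getVert mW) ((s:ℤ) - (mW:ℤ)) :=
      fun s hs1 hs2 => wEdge_lE affW2 hs1 (by omega)
    have ha' : lE (Ww.getVert mW) (Ww.getVert (mW+1) - Ww.getVert mW) ((sa:ℤ) - (mW:ℤ)) =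
        lE y v τa := by rw [← eW2 sa hsa' hsa]; exact ea
    have hc' : lE (Ww.getVert mW) (Ww.getVert (mW+1) - Ww.getVert mW) ((sc:ℤ) - (mW:ℤ)) =
        lE y v τc := by rw [← eW2 sc hsc' hsc]; exact ec
    obtain ⟨β, hβ, heq⟩ := line_between hv ha' hc' hab hbc
    obtain ⟨n, hn⟩ : ∃ n : ℕ, (n:ℤ) = mW + β :=
      ⟨(mW + β).toNat, Int.toNat_of_nonneg (by omega)⟩
    refine ⟨n, by omega, ?_⟩
    rw [eW2 n (by omega) (by omega), show ((n:ℤ) - (mW:ℤ)) = β by omega]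
    exact heq
lemma key {qu qv wu wv : ℤ × ℤ} {Qw : TGrid.Walk qu qv} {Ww : TGrid.Walk wu wv}
    (hQp : Qw.IsPath) (hWp : Ww.IsPath)
    (hQb : bendCount Qw ≤ 1) (hWb : bendCount Ww ≤ 1)
    (hQl : 0 < Qw.length) (hWl : 0 < Ww.length)
    {ta tb tc sa sc : ℕ} (hab : ta < tb) (hbc : tb < tc) (htc : tc < Qw.length)
    (hsa : sa < Ww.length) (hsc : sc < Ww.length)
    (ea : wEdge Ww sa = wEdge Qw ta) (ec : wEdge Ww sc = wEdge Qw tc) :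
    ∃ s, s < Ww.length ∧ wEdge Ww s = wEdge Qw tb := by
  obtain ⟨mQ, hq1, hq2, hQseg1, hQseg2, hQbend⟩ := splitBend Qw hQb hQl
  have affQ1 : ∀ t, 0 ≤ t → t ≤ mQ → Qw.getVert t =
      Qw.getVert mQ + ((t:ℤ) - (mQ:ℤ)) • (Qw.getVert 1 - Qw.getVert 0) :=
    affine hQp hq2 (Nat.zero_le _) (le_refl _) (fun t _ ht => hQseg1 t 0 ht (by omega))
  have eQ1 : ∀ t, t + 1 ≤ mQ → wEdge Qw t =
      lE (Qw.getVert mQ) (Qw.getVert 1 - Qw.getVert 0) ((t:ℤ) - (mQ:ℤ)) :=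
    fun t ht => wEdge_lE affQ1 (Nat.zero_le _) ht
  have hv1six : six (Qw.getVert 1 - Qw.getVert 0) := step_six Qw (by omega)
  rcases Nat.lt_or_ge tc mQ with hcase | hcase
  · -- all three Q-edges in the first straight part of Q
    obtain ⟨s, hs, heq⟩ := Wside hWp hWb hWl (six_ne_zero hv1six)
      (show (ta:ℤ) - (mQ:ℤ) < (tb:ℤ) - (mQ:ℤ) by omega)
      (show (tb:ℤ) - (mQ:ℤ) < (tc:ℤ) - (mQ:ℤ) by omega) hsa hsc
      (by rw [ea]; exact eQ1 ta (by omega)) (by rw [ec]; exact eQ1 tc (by omega))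
    exact ⟨s, hs, by rw [heq, ← eQ1 tb (by omega)]⟩
  · have hmQlt : mQ < Qw.length := by omega
    have affQ2 : ∀ t, mQ ≤ t → t ≤ Qw.length → Qw.getVert t =
        Qw.getVert mQ + ((t:ℤ) - (mQ:ℤ)) • (Qw.getVert (mQ+1) - Qw.getVert mQ) :=
      affine hQp (le_refl _) (le_refl _) hq2
        (fun t ht1 ht2 => hQseg2 t mQ ht1 ht2 (le_refl _) hmQlt)
    have eQ2 : ∀ t, mQ ≤ t → t < Qw.length → wEdge Qw t =
        lE (Qw.getVert mQ) (Qw.getVert (mQ+1) - Qw.getVert mQ) ((t:ℤ) - (mQ:ℤ)) :=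
      fun t ht1 ht2 => wEdge_lE affQ2 ht1 (by omega)
    have hv2six : six (Qw.getVert (mQ+1) - Qw.getVert mQ) := step_six Qw hmQlt
    rcases Nat.lt_or_ge ta mQ with hcase2 | hcase2
    · -- the bend of Q lies strictly between the a-edge and the c-edge
      have hbne := hQbend hmQlt
      have hne : ¬ ((Qw.getVert 1 - Qw.getVert 0) = (Qw.getVert (mQ+1) - Qw.getVert mQ) ∨
          (Qw.getVert 1 - Qw.getVert 0) = -(Qw.getVert (mQ+1) - Qw.getVert mQ)) := by
        rintro (h | h) <;> apply hbne <;>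
          rw [eQ1 (mQ-1) (by omega), eQ2 mQ (le_refl _) hmQlt, edir_lE, edir_lE, h] <;>
          simp [Prod.fst_neg, Prod.snd_neg, abs_neg, abs_sub_comm]
      obtain ⟨mW, hw1, hw2, hWseg1, hWseg2, hWbend⟩ := splitBend Ww hWb hWl
      have affW1 : ∀ s, 0 ≤ s → s ≤ mW → Ww.getVert s =
          Ww.getVert mW + ((s:ℤ) - (mW:ℤ)) • (Ww.getVert 1 - Ww.getVert 0) :=
        affine hWp hw2 (Nat.zero_le _) (le_refl _) (fun t _ ht => hWseg1 t 0 ht (by omega))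
      have eW1 : ∀ s, s + 1 ≤ mW → wEdge Ww s =
          lE (Ww.getVert mW) (Ww.getVert 1 - Ww.getVert 0) ((s:ℤ) - (mW:ℤ)) :=
        fun s hs => wEdge_lE affW1 (Nat.zero_le _) hs
      rcases Nat.lt_or_ge sa mW with hsa' | hsa' <;> rcases Nat.lt_or_ge sc mW with hsc' | hsc'
      · -- both W-edges in first W segment : contradiction
        exfalso
        apply hbne
        calc edir (wEdge Qw (mQ - 1)) = edir (wEdge Qw ta) :=
              hQseg1 (mQ-1) ta (by omega) (by omega)
          _ = edir (wEdge Ww sa) := (congrArg edir ea).symm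
          _ = edir (wEdge Ww sc) := hWseg1 sa sc hsa' hsc'
          _ = edir (wEdge Qw tc) := congrArg edir ec
          _ = edir (wEdge Qw mQ) := hQseg2 tc mQ hcase htc (le_refl _) hmQlt
      · -- sa in first W segment, sc in second
        have hmWlt : mW < Ww.length := by omega
        have affW2 : ∀ s, mW ≤ s → s ≤ Ww.length → Ww.getVert s =
            Ww.getVert mW + ((s:ℤ) - (mW:ℤ)) • (Ww.getVert (mW+1) - Ww.getVert mW) :=
          affine hWp (le_refl _) (le_refl _) hw2
            (fun t ht1 ht2 => hWseg2 t mW ht1 ht2 (le_refl _) hmWlt)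
        have eW2 : ∀ s, mW ≤ s → s < Ww.length → wEdge Ww s =
            lE (Ww.getVert mW) (Ww.getVert (mW+1) - Ww.getVert mW) ((s:ℤ) - (mW:ℤ)) :=
          fun s hs1 hs2 => wEdge_lE affW2 hs1 (by omega)
        have ha' : lE (Ww.getVert mW) (Ww.getVert 1 - Ww.getVert 0) ((sa:ℤ) - (mW:ℤ)) =
            lE (Qw.getVert mQ) (Qw.getVert 1 - Qw.getVert 0) ((ta:ℤ) - (mQ:ℤ)) := by
          rw [← eW1 sa (by omega), ← eQ1 ta (by omega)]; exact ea
        have hc' : lE (Ww.getVert mW) (Ww.getVert (mW+1) - Ww.getVert mW) ((sc:ℤ) - (mW:ℤ)) =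
            lE (Qw.getVert mQ) (Qw.getVert (mQ+1) - Qw.getVert mQ) ((tc:ℤ) - (mQ:ℤ)) := by
          rw [← eW2 sc hsc' hsc, ← eQ2 tc hcase htc]; exact ec
        have hzz : Ww.getVert mW = Qw.getVert mQ := by
          rcases lemA ha' with ⟨-, hz1⟩ | ⟨-, hz1⟩ <;>
            rcases lemA hc' with ⟨-, hz2⟩ | ⟨-, hz2⟩ <;>
            · have hk := (indep hv1six hv2six hne (add_left_cancel (hz1.symm.trans hz2))).1
              rw [hz1, hk, zero_smul, add_zero]
        rw [hzz] at ha' hc'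
        rcases Nat.lt_or_ge tb mQ with htb' | htb'
        · -- middle edge on the a-side line
          obtain ⟨β, hβ, heq⟩ := line_anchor (six_ne_zero hv1six) ha'
            (show (ta:ℤ) - (mQ:ℤ) < (tb:ℤ) - (mQ:ℤ) by omega)
            (show (tb:ℤ) - (mQ:ℤ) < 0 by omega)
          rcases hβ with ⟨hα, hβ1, hβ2⟩ | ⟨hα, -, -⟩
          · obtain ⟨n, hn⟩ : ∃ n : ℕ, (n:ℤ) = mW + β :=
              ⟨(mW + β).toNat, Int.toNat_of_nonneg (by omega)⟩
            refine ⟨n, by omega, ?_⟩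
            rw [eW1 n (by omega), hzz, show ((n:ℤ) - (mW:ℤ)) = β by omega, heq,
              ← eQ1 tb (by omega)]
          · omega
        · -- middle edge on the c-side line
          rw [lE_neg (Qw.getVert mQ) (Qw.getVert (mQ+1) - Qw.getVert mQ) ((tc:ℤ) - (mQ:ℤ))]
            at hc'
          have hvn : -(Qw.getVert (mQ+1) - Qw.getVert mQ) ≠ 0 := by
            intro h0; exact six_ne_zero hv2six (neg_eq_zero.mp h0)
          obtain ⟨β, hβ, heq⟩ := line_anchor hvn hc'
            (show -((tc:ℤ) - (mQ:ℤ)) - 1 < -((tb:ℤ) - (mQ:ℤ)) - 1 by omega)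
            (show -((tb:ℤ) - (mQ:ℤ)) - 1 < 0 by omega)
          rcases hβ with ⟨hα, -, -⟩ | ⟨hα, hβ1, hβ2⟩
          · omega
          · obtain ⟨n, hn⟩ : ∃ n : ℕ, (n:ℤ) = mW + β :=
              ⟨(mW + β).toNat, Int.toNat_of_nonneg (by omega)⟩
            refine ⟨n, by omega, ?_⟩
            rw [eW2 n (by omega) (by omega), hzz, show ((n:ℤ) - (mW:ℤ)) = β by omega, heq,
              eQ2 tb htb' (by omega), ← lE_neg]
      · -- sc in first W segment, sa in second
        have hmWlt : mW < Ww.length := by omega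
        have affW2 : ∀ s, mW ≤ s → s ≤ Ww.length → Ww.getVert s =
            Ww.getVert mW + ((s:ℤ) - (mW:ℤ)) • (Ww.getVert (mW+1) - Ww.getVert mW) :=
          affine hWp (le_refl _) (le_refl _) hw2
            (fun t ht1 ht2 => hWseg2 t mW ht1 ht2 (le_refl _) hmWlt)
        have eW2 : ∀ s, mW ≤ s → s < Ww.length → wEdge Ww s =
            lE (Ww.getVert mW) (Ww.getVert (mW+1) - Ww.getVert mW) ((s:ℤ) - (mW:ℤ)) :=
          fun s hs1 hs2 => wEdge_lE affW2 hs1 (by omega)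
        have ha' : lE (Ww.getVert mW) (Ww.getVert (mW+1) - Ww.getVert mW) ((sa:ℤ) - (mW:ℤ)) =
            lE (Qw.getVert mQ) (Qw.getVert 1 - Qw.getVert 0) ((ta:ℤ) - (mQ:ℤ)) := by
          rw [← eW2 sa hsa' hsa, ← eQ1 ta (by omega)]; exact ea
        have hc' : lE (Ww.getVert mW) (Ww.getVert 1 - Ww.getVert 0) ((sc:ℤ) - (mW:ℤ)) =
            lE (Qw.getVert mQ) (Qw.getVert (mQ+1) - Qw.getVert mQ) ((tc:ℤ) - (mQ:ℤ)) := by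
          rw [← eW1 sc (by omega), ← eQ2 tc hcase htc]; exact ec
        have hzz : Ww.getVert mW = Qw.getVert mQ := by
          rcases lemA ha' with ⟨-, hz1⟩ | ⟨-, hz1⟩ <;>
            rcases lemA hc' with ⟨-, hz2⟩ | ⟨-, hz2⟩ <;>
            · have hk := (indep hv1six hv2six hne (add_left_cancel (hz1.symm.trans hz2))).1
              rw [hz1, hk, zero_smul, add_zero]
        rw [hzz] at ha' hc'
        rcases Nat.lt_or_ge tb mQ with htb' | htb'
        · -- middle edge on the a-side line ; sa is in the second W segment
          obtain ⟨β, hβ, heq⟩ := line_anchor (six_ne_zero hv1six) ha'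
            (show (ta:ℤ) - (mQ:ℤ) < (tb:ℤ) - (mQ:ℤ) by omega)
            (show (tb:ℤ) - (mQ:ℤ) < 0 by omega)
          rcases hβ with ⟨hα, -, -⟩ | ⟨hα, hβ1, hβ2⟩
          · omega
          · obtain ⟨n, hn⟩ : ∃ n : ℕ, (n:ℤ) = mW + β :=
              ⟨(mW + β).toNat, Int.toNat_of_nonneg (by omega)⟩
            refine ⟨n, by omega, ?_⟩
            rw [eW2 n (by omega) (by omega), hzz, show ((n:ℤ) - (mW:ℤ)) = β by omega, heq,
              ← eQ1 tb (by omega)]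
        · -- middle edge on the c-side line ; sc is in the first W segment
          rw [lE_neg (Qw.getVert mQ) (Qw.getVert (mQ+1) - Qw.getVert mQ) ((tc:ℤ) - (mQ:ℤ))]
            at hc'
          have hvn : -(Qw.getVert (mQ+1) - Qw.getVert mQ) ≠ 0 := by
            intro h0; exact six_ne_zero hv2six (neg_eq_zero.mp h0)
          obtain ⟨β, hβ, heq⟩ := line_anchor hvn hc'
            (show -((tc:ℤ) - (mQ:ℤ)) - 1 < -((tb:ℤ) - (mQ:ℤ)) - 1 by omega)
            (show -((tb:ℤ) - (mQ:ℤ)) - 1 < 0 by omega)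
          rcases hβ with ⟨hα, hβ1, hβ2⟩ | ⟨hα, -, -⟩
          · obtain ⟨n, hn⟩ : ∃ n : ℕ, (n:ℤ) = mW + β :=
              ⟨(mW + β).toNat, Int.toNat_of_nonneg (by omega)⟩
            refine ⟨n, by omega, ?_⟩
            rw [eW1 n (by omega), hzz, show ((n:ℤ) - (mW:ℤ)) = β by omega, heq,
              eQ2 tb htb' (by omega), ← lE_neg]
          · omega
      · -- both W-edges in second W segment : contradiction
        exfalso
        apply hbne
        calc edir (wEdge Qw (mQ - 1)) = edir (wEdge Qw ta) :=
              hQseg1 (mQ-1) ta (by omega) (by omega)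
          _ = edir (wEdge Ww sa) := (congrArg edir ea).symm
          _ = edir (wEdge Ww sc) := hWseg2 sa sc hsa' hsa hsc' hsc
          _ = edir (wEdge Qw tc) := congrArg edir ec
          _ = edir (wEdge Qw mQ) := hQseg2 tc mQ hcase htc (le_refl _) hmQlt
    · -- all three Q-edges in the second straight part of Q
      obtain ⟨s, hs, heq⟩ := Wside hWp hWb hWl (six_ne_zero hv2six)
        (show (ta:ℤ) - (mQ:ℤ) < (tb:ℤ) - (mQ:ℤ) by omega)
        (show (tb:ℤ) - (mQ:ℤ) < (tc:ℤ) - (mQ:ℤ) by omega) hsa hsc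
        (by rw [ea]; exact eQ2 ta hcase2 (by omega)) (by rw [ec]; exact eQ2 tc hcase htc)
      exact ⟨s, hs, by rw [heq, ← eQ2 tb (by omega) (by omega)]⟩
/-- If a family of at least four paths on the triangular grid
admits a system of non-representative edges, three of which lie on a common path `Q`
with at most one bend, with one lying between the other two on `Q`, then the path
missing the middle edge has at least two bends. -/
theorem stmt6 (h : ℕ) (hh : 4 ≤ h)
    (P : Fin h → TPath) (u : Fin h → Sym2 (ℤ × ℤ))
    (hinj : Function.Injective u)
    (hmiss : ∀ i, u i ∉ pEdges (P i))
    (hhit : ∀ i j, i ≠ j → u i ∈ pEdges (P j))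
    (a b c : Fin h) (hab : a ≠ b) (hbc : b ≠ c) (hac : a ≠ c)
    (Q : TPath) (hQ : bendCount Q.walk ≤ 1)
    (ta tb tc : ℕ)
    (hta : ta < Q.walk.length) (htb : tb < Q.walk.length) (htc : tc < Q.walk.length)
    (hea : u a = wEdge Q.walk ta) (heb : u b = wEdge Q.walk tb) (hec : u c = wEdge Q.walk tc)
    (hbetween : (ta < tb ∧ tb < tc) ∨ (tc < tb ∧ tb < ta)) :
    2 ≤ bendCount (P b).walk := by
  by_contra hcon
  push_neg at hcon
  have hWb : bendCount (P b).walk ≤ 1 := by omega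
  have hamem : u a ∈ (P b).walk.edges := hhit a b hab
  have hcmem : u c ∈ (P b).walk.edges := hhit c b (Ne.symm hbc)
  obtain ⟨sa, hsa, haeq⟩ := (mem_edges_iff (P b).walk (u a)).mp hamem
  obtain ⟨sc, hsc, hceq⟩ := (mem_edges_iff (P b).walk (u c)).mp hcmem
  have ea : wEdge (P b).walk sa = wEdge Q.walk ta := haeq.symm.trans hea
  have ec : wEdge (P b).walk sc = wEdge Q.walk tc := hceq.symm.trans hec
  rcases hbetween with ⟨o1, o2⟩ | ⟨o1, o2⟩
  · obtain ⟨s, hs, heq⟩ := key Q.isPath (P b).isPath hQ hWb Q.nontriv (P b).nontriv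
      o1 o2 htc hsa hsc ea ec
    exact hmiss b ((mem_edges_iff _ _).mpr ⟨s, hs, heb.trans heq.symm⟩)
  · obtain ⟨s, hs, heq⟩ := key Q.isPath (P b).isPath hQ hWb Q.nontriv (P b).nontriv
      o1 o2 hta hsc hsa ec ea
    exact hmiss b ((mem_edges_iff _ _).mpr ⟨s, hs, heb.trans heq.symm⟩)
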